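/- arXiv:1304.0534 — 2 statements merged into one kernel-verified Lean document; each statement's English description precedes it below -/
import Mathlib

section
/- For every s ∈ [0,T] and every function u on [0,T] with u, u', u'' absolutely continuous, u''' ∈ L²[0,T], and u(0) = u'(0) = 0, the reproducing property holds: u(s) = Σ_{i=0}^{2} u^{(i)}(0)·r_s^{(i)}(0) + ∫₀^T u'''(t)·(∂³/∂t³)r_s(t) dt. -/
open MeasureTheory intervalIntegral
open Set

section helpers

lemma hasDerivAt_poly5 (a0 a1 a2 a3 a4 a5 t : ℝ) :
    HasDerivAt (fun x : ℝ => a0 + a1*x + a2*x^2 + a3*x^3 + a4*x^4 + a5*x^5)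
      (a1 + 2*a2*t + 3*a3*t^2 + 4*a4*t^3 + 5*a5*t^4) t := by
  have h := (((((hasDerivAt_const t a0).add ((hasDerivAt_id t).const_mul a1)).add
      ((hasDerivAt_pow 2 t).const_mul a2)).add
      ((hasDerivAt_pow 3 t).const_mul a3)).add
      ((hasDerivAt_pow 4 t).const_mul a4)).add
      ((hasDerivAt_pow 5 t).const_mul a5)
  refine h.congr_deriv ?_
  push_cast
  ring

lemma deriv_if (s : ℝ) (f g f' g' : ℝ → ℝ)
    (hf : ∀ t, HasDerivAt f (f' t) t) (hg : ∀ t, HasDerivAt g (g' t) t)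
    (hfg : f s = g s) (hfg' : f' s = g' s) :
    deriv (fun t => if t ≤ s then f t else g t) = fun t => if t ≤ s then f' t else g' t := by
  funext t
  rcases lt_trichotomy t s with h | h | h
  · have hev : (fun t => if t ≤ s then f t else g t) =ᶠ[nhds t] f := by
      filter_upwards [eventually_lt_nhds h] with x hx
      simp [hx.le]
    rw [Filter.EventuallyEq.deriv_eq hev, (hf t).deriv, if_pos h.le]
  · subst h
    have h1 : HasDerivWithinAt (fun t' => if t' ≤ t then f t' else g t') (f' t) (Iic t) t := by
      refine (hf t).hasDerivWithinAt.congr (fun y hy => ?_) (by simp)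
      simp [mem_Iic.mp hy]
    have h2 : HasDerivWithinAt (fun t' => if t' ≤ t then f t' else g t') (f' t) (Ioi t) t := by
      rw [hfg']
      refine (hg t).hasDerivWithinAt.congr (fun y hy => ?_) (by simp [hfg])
      simp [not_le.mpr (mem_Ioi.mp hy)]
    have := (h1.union h2)
    rw [Iic_union_Ioi] at this
    rw [(this.hasDerivAt (by simp)).deriv, if_pos le_rfl]
  · have hev : (fun t => if t ≤ s then f t else g t) =ᶠ[nhds t] g := by
      filter_upwards [eventually_gt_nhds h] with x hx
      simp [not_le.mpr hx]
    rw [Filter.EventuallyEq.deriv_eq hev, (hg t).deriv, if_neg (not_le.mpr h)]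

lemma swap_aux (s : ℝ) (hs : 0 ≤ s) (w g : ℝ → ℝ) (hw : Continuous w)
    (hg : IntegrableOn g (Set.Icc 0 s)) :
    (∫ t in (0:ℝ)..s, w t * ∫ τ in (0:ℝ)..t, g τ)
      = ∫ τ in (0:ℝ)..s, (∫ t in τ..s, w t) * g τ := by
  set μ := volume.restrict (Set.Ioc (0:ℝ) s) with hμ
  set F : ℝ → ℝ → ℝ := fun t τ => if τ ≤ t then w t * g τ else 0 with hF
  have hwI : IntegrableOn w (Ioc 0 s) := (hw.integrableOn_Icc).mono_set Ioc_subset_Icc_self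
  have hgI : IntegrableOn g (Ioc 0 s) := hg.mono_set Ioc_subset_Icc_self
  have hunc : Function.uncurry F =
      Set.indicator {p : ℝ × ℝ | p.2 ≤ p.1} (fun p => w p.1 * g p.2) := by
    funext p
    rw [Set.indicator_apply]
    rfl
  have hFint : Integrable (Function.uncurry F) (μ.prod μ) := by
    rw [hunc]
    exact (Integrable.mul_prod hwI hgI).indicator
      (measurableSet_le measurable_snd measurable_fst)
  have claimA : ∀ t ∈ Ioc (0:ℝ) s, (∫ τ, F t τ ∂μ) = w t * ∫ τ in (0:ℝ)..t, g τ := by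
    intro t ht
    have : (fun τ => F t τ) = Set.indicator (Iic t) (fun τ => w t * g τ) := by
      funext τ; rw [Set.indicator_apply]; rfl
    rw [this, MeasureTheory.integral_indicator measurableSet_Iic, hμ,
      Measure.restrict_restrict measurableSet_Iic]
    have : Iic t ∩ Ioc 0 s = Ioc 0 t := by
      ext x; simp only [mem_inter_iff, mem_Iic, mem_Ioc]
      constructor
      · rintro ⟨h1, h2, h3⟩; exact ⟨h2, h1⟩
      · rintro ⟨h1, h2⟩; exact ⟨h2, h1, h2.trans ht.2⟩
    rw [this, intervalIntegral.integral_of_le ht.1.le, MeasureTheory.integral_const_mul]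
  have claimB : ∀ τ ∈ Ioc (0:ℝ) s, (∫ t, F t τ ∂μ) = (∫ t in τ..s, w t) * g τ := by
    intro τ hτ
    have : (fun t => F t τ) = Set.indicator (Ici τ) (fun t => w t * g τ) := by
      funext t; rw [Set.indicator_apply]; rfl
    rw [this, MeasureTheory.integral_indicator measurableSet_Ici, hμ,
      Measure.restrict_restrict measurableSet_Ici]
    have h1 : Ici τ ∩ Ioc 0 s = Icc τ s := by
      ext x; simp only [mem_inter_iff, mem_Ici, mem_Ioc, mem_Icc]
      constructor
      · rintro ⟨h1, _, h3⟩; exact ⟨h1, h3⟩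
      · rintro ⟨h1, h2⟩; exact ⟨h1, hτ.1.trans_le h1, h2⟩
    rw [h1, integral_Icc_eq_integral_Ioc, MeasureTheory.integral_mul_const,
      ← intervalIntegral.integral_of_le hτ.2]
  rw [intervalIntegral.integral_of_le hs, intervalIntegral.integral_of_le hs]
  calc ∫ t in Ioc 0 s, w t * ∫ τ in (0:ℝ)..t, g τ
      = ∫ t, (∫ τ, F t τ ∂μ) ∂μ := by
        refine setIntegral_congr_fun measurableSet_Ioc (fun t ht => ?_)
        exact (claimA t ht).symm
    _ = ∫ τ, (∫ t, F t τ ∂μ) ∂μ := integral_integral_swap hFint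
    _ = ∫ τ in Ioc 0 s, (∫ t in τ..s, w t) * g τ := by
        refine setIntegral_congr_fun measurableSet_Ioc (fun τ hτ => ?_)
        exact claimB τ hτ

end helpers

/-- Kernel of `W³₂[0,T]`. -/
noncomputable def r (s t : ℝ) : ℝ :=
  if t ≤ s then
    (1/4)*s^2*t^2 + (1/12)*s^2*t^3 - (1/24)*s*t^4 + (1/120)*t^5
  else
    (1/4)*s^2*t^2 + (1/12)*s^3*t^2 - (1/24)*t*s^4 + (1/120)*s^5

/-- Reproducing property in `W³₂[0,T]`: for `u` with `u, u', u''` absolutely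
continuous (expressed via integral representations with derivatives
`u₁, u₂, u₃`), `u''' ∈ L²[0,T]` and `u(0) = u'(0) = 0`,
`u(s) = Σ_{i=0}^{2} u⁽ⁱ⁾(0) · r_s⁽ⁱ⁾(0) + ∫₀ᵀ u'''(t) · ∂ₜ³ r_s(t) dt`. -/
theorem stmt_6 (T : ℝ) (hT : 0 < T) (u u₁ u₂ u₃ : ℝ → ℝ)
    (hAC : ∀ x ∈ Set.Icc (0:ℝ) T, u x = u 0 + ∫ t in (0:ℝ)..x, u₁ t)
    (hAC1 : ∀ x ∈ Set.Icc (0:ℝ) T, u₁ x = u₁ 0 + ∫ t in (0:ℝ)..x, u₂ t)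
    (hAC2 : ∀ x ∈ Set.Icc (0:ℝ) T, u₂ x = u₂ 0 + ∫ t in (0:ℝ)..x, u₃ t)
    (hL2 : MemLp u₃ 2 (volume.restrict (Set.Icc (0:ℝ) T)))
    (h0 : u 0 = 0) (h1 : u₁ 0 = 0)
    (s : ℝ) (hs : s ∈ Set.Icc (0:ℝ) T) :
    u s = u 0 * r s 0 + u₁ 0 * deriv (fun t => r s t) 0
        + u₂ 0 * deriv (deriv (fun t => r s t)) 0
        + ∫ t in (0:ℝ)..T, u₃ t * deriv (deriv (deriv (fun t => r s t))) t := by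
  have hs0 : (0:ℝ) ≤ s := hs.1
  have hsT : s ≤ T := hs.2
  have h0T : (0:ℝ) ≤ T := hT.le
  have hIss : Icc (0:ℝ) s ⊆ Icc 0 T := Icc_subset_Icc le_rfl hsT
  -- derivative computations for the kernel
  have Hf0 : ∀ t, HasDerivAt
      (fun t => (1/4)*s^2*t^2 + (1/12)*s^2*t^3 - (1/24)*s*t^4 + (1/120)*t^5)
      ((1/2)*s^2*t + (1/4)*s^2*t^2 - (1/6)*s*t^3 + (1/24)*t^4) t := by
    intro t
    have h := hasDerivAt_poly5 0 0 ((1/4)*s^2) ((1/12)*s^2) (-((1/24)*s)) (1/120) t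
    have e : (fun x:ℝ => 0 + 0*x + (1/4)*s^2*x^2 + (1/12)*s^2*x^3 + -((1/24)*s)*x^4 + (1/120)*x^5)
        = (fun x:ℝ => (1/4)*s^2*x^2 + (1/12)*s^2*x^3 - (1/24)*s*x^4 + (1/120)*x^5) := by
      funext x; ring
    rw [e] at h
    convert h using 1; ring
  have Hg0 : ∀ t, HasDerivAt
      (fun t => (1/4)*s^2*t^2 + (1/12)*s^3*t^2 - (1/24)*t*s^4 + (1/120)*s^5)
      ((1/2)*s^2*t + (1/6)*s^3*t - (1/24)*s^4) t := by
    intro t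
    have h := hasDerivAt_poly5 ((1/120)*s^5) (-((1/24)*s^4)) ((1/4)*s^2+(1/12)*s^3) 0 0 0 t
    have e : (fun x:ℝ => (1/120)*s^5 + -((1/24)*s^4)*x + ((1/4)*s^2+(1/12)*s^3)*x^2 + 0*x^3 + 0*x^4 + 0*x^5)
        = (fun x:ℝ => (1/4)*s^2*x^2 + (1/12)*s^3*x^2 - (1/24)*x*s^4 + (1/120)*s^5) := by
      funext x; ring
    rw [e] at h
    convert h using 1; ring
  have Hf1 : ∀ t, HasDerivAt
      (fun t => (1/2)*s^2*t + (1/4)*s^2*t^2 - (1/6)*s*t^3 + (1/24)*t^4)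
      ((1/2)*s^2 + (1/2)*s^2*t - (1/2)*s*t^2 + (1/6)*t^3) t := by
    intro t
    have h := hasDerivAt_poly5 0 ((1/2)*s^2) ((1/4)*s^2) (-((1/6)*s)) (1/24) 0 t
    have e : (fun x:ℝ => 0 + (1/2)*s^2*x + (1/4)*s^2*x^2 + -((1/6)*s)*x^3 + (1/24)*x^4 + 0*x^5)
        = (fun x:ℝ => (1/2)*s^2*x + (1/4)*s^2*x^2 - (1/6)*s*x^3 + (1/24)*x^4) := by
      funext x; ring
    rw [e] at h
    convert h using 1; ring
  have Hg1 : ∀ t, HasDerivAt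
      (fun t => (1/2)*s^2*t + (1/6)*s^3*t - (1/24)*s^4)
      ((1/2)*s^2 + (1/6)*s^3) t := by
    intro t
    have h := hasDerivAt_poly5 (-((1/24)*s^4)) ((1/2)*s^2+(1/6)*s^3) 0 0 0 0 t
    have e : (fun x:ℝ => -((1/24)*s^4) + ((1/2)*s^2+(1/6)*s^3)*x + 0*x^2 + 0*x^3 + 0*x^4 + 0*x^5)
        = (fun x:ℝ => (1/2)*s^2*x + (1/6)*s^3*x - (1/24)*s^4) := by
      funext x; ring
    rw [e] at h
    convert h using 1; ring
  have Hf2 : ∀ t, HasDerivAt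
      (fun t => (1/2)*s^2 + (1/2)*s^2*t - (1/2)*s*t^2 + (1/6)*t^3)
      ((1/2)*s^2 - s*t + (1/2)*t^2) t := by
    intro t
    have h := hasDerivAt_poly5 ((1/2)*s^2) ((1/2)*s^2) (-((1/2)*s)) (1/6) 0 0 t
    have e : (fun x:ℝ => (1/2)*s^2 + (1/2)*s^2*x + -((1/2)*s)*x^2 + (1/6)*x^3 + 0*x^4 + 0*x^5)
        = (fun x:ℝ => (1/2)*s^2 + (1/2)*s^2*x - (1/2)*s*x^2 + (1/6)*x^3) := by
      funext x; ring
    rw [e] at h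
    convert h using 1; ring
  have hr : (fun t => r s t) = fun t => if t ≤ s then
      (1/4)*s^2*t^2 + (1/12)*s^2*t^3 - (1/24)*s*t^4 + (1/120)*t^5
    else (1/4)*s^2*t^2 + (1/12)*s^3*t^2 - (1/24)*t*s^4 + (1/120)*s^5 := by
    funext t; simp only [r]
  have d1 : deriv (fun t => r s t) = fun t => if t ≤ s then
      (1/2)*s^2*t + (1/4)*s^2*t^2 - (1/6)*s*t^3 + (1/24)*t^4
    else (1/2)*s^2*t + (1/6)*s^3*t - (1/24)*s^4 := by
    rw [hr]
    exact deriv_if s _ _ _ _ Hf0 Hg0 (by ring) (by ring)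
  have d2 : deriv (deriv (fun t => r s t)) = fun t => if t ≤ s then
      (1/2)*s^2 + (1/2)*s^2*t - (1/2)*s*t^2 + (1/6)*t^3
    else (1/2)*s^2 + (1/6)*s^3 := by
    rw [d1]
    exact deriv_if s _ _ _ _ Hf1 Hg1 (by ring) (by ring)
  have d3 : deriv (deriv (deriv (fun t => r s t))) = fun t => if t ≤ s then
      (1/2)*s^2 - s*t + (1/2)*t^2 else (0:ℝ) := by
    rw [d2]
    exact deriv_if s _ _ _ (fun _ => (0:ℝ)) Hf2 (fun t => hasDerivAt_const t _)
      (by ring) (by show (1/2)*s^2 - s*s + (1/2)*s^2 = (0:ℝ); ring)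
  -- integrability facts
  haveI : IsFiniteMeasure (volume.restrict (Icc (0:ℝ) T)) :=
    ⟨by rw [Measure.restrict_apply_univ]; exact measure_Icc_lt_top⟩
  have hu₃T : IntegrableOn u₃ (Icc 0 T) := hL2.integrable one_le_two
  have hu₃s : IntegrableOn u₃ (Icc 0 s) := hu₃T.mono_set hIss
  have hGcont : ContinuousOn (fun x => ∫ τ in (0:ℝ)..x, u₃ τ) (Icc 0 T) := by
    have h := intervalIntegral.continuousOn_primitive_interval
      (a := 0) (b := T) (μ := volume) (f := u₃) (by rwa [uIcc_of_le h0T])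
    rwa [uIcc_of_le h0T] at h
  have hu₂cont : ContinuousOn u₂ (Icc 0 T) :=
    (continuousOn_const.add hGcont).congr (fun x hx => hAC2 x hx)
  have hu₂s : IntegrableOn u₂ (Icc 0 s) := (hu₂cont.mono hIss).integrableOn_Icc
  -- LHS computation
  have hΨ : ∀ x:ℝ, HasDerivAt (fun y => s*y - y^2/2) (s - x) x := by
    intro x
    have h := ((hasDerivAt_id x).const_mul s).sub ((hasDerivAt_pow 2 x).div_const 2)
    refine h.congr_deriv ?_; push_cast; ring
  have hΦ : ∀ x:ℝ, HasDerivAt (fun y => u₂ 0 * (s*y - y^2/2)) ((s - x) * u₂ 0) x := by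
    intro x
    have h := (hΨ x).const_mul (u₂ 0)
    refine h.congr_deriv ?_; ring
  have e1 : (∫ τ in (0:ℝ)..s, (s - τ) * u₂ 0) = u₂ 0 * ((1/2)*s^2) := by
    rw [integral_eq_sub_of_hasDerivAt (fun x _ => hΦ x)
      (Continuous.intervalIntegrable (by fun_prop) _ _)]
    ring
  have hswap1 : (∫ t in (0:ℝ)..s, ∫ τ in (0:ℝ)..t, u₂ τ)
      = ∫ τ in (0:ℝ)..s, (s - τ) * u₂ τ := by
    have h := swap_aux s hs0 (fun _ => (1:ℝ)) u₂ continuous_const hu₂s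
    simpa using h
  have hswap2 : (∫ t in (0:ℝ)..s, (s - t) * ∫ τ in (0:ℝ)..t, u₃ τ)
      = ∫ τ in (0:ℝ)..s, (∫ t in τ..s, (s - t)) * u₃ τ :=
    swap_aux s hs0 (fun t => s - t) u₃ (by fun_prop) hu₃s
  have e2 : (∫ τ in (0:ℝ)..s, (∫ t in τ..s, (s - t)) * u₃ τ)
      = ∫ t in (0:ℝ)..s, u₃ t * ((1/2)*s^2 - s*t + (1/2)*t^2) := by
    refine intervalIntegral.integral_congr (fun τ _ => ?_)
    rw [integral_eq_sub_of_hasDerivAt (fun x _ => hΨ x)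
      (Continuous.intervalIntegrable (by fun_prop) _ _)]
    ring
  have ia : IntervalIntegrable (fun τ => (s - τ) * u₂ 0) volume 0 s :=
    Continuous.intervalIntegrable (by fun_prop) _ _
  have ib : IntervalIntegrable (fun τ => (s - τ) * ∫ x in (0:ℝ)..τ, u₃ x) volume 0 s := by
    apply ContinuousOn.intervalIntegrable
    rw [uIcc_of_le hs0]
    exact (continuousOn_const.sub continuousOn_id).mul
      ((hGcont.mono hIss))
  have hL : u s = u₂ 0 * ((1/2)*s^2)
      + ∫ t in (0:ℝ)..s, u₃ t * ((1/2)*s^2 - s*t + (1/2)*t^2) := by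
    calc u s = ∫ t in (0:ℝ)..s, u₁ t := by rw [hAC s hs, h0, zero_add]
      _ = ∫ t in (0:ℝ)..s, ∫ τ in (0:ℝ)..t, u₂ τ := by
          refine intervalIntegral.integral_congr (fun t ht => ?_)
          rw [uIcc_of_le hs0] at ht
          rw [hAC1 t (hIss ht), h1, zero_add]
      _ = ∫ τ in (0:ℝ)..s, (s - τ) * u₂ τ := hswap1
      _ = ∫ τ in (0:ℝ)..s, ((s - τ) * u₂ 0 + (s - τ) * ∫ x in (0:ℝ)..τ, u₃ x) := by
          refine intervalIntegral.integral_congr (fun τ hτ => ?_)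
          rw [uIcc_of_le hs0] at hτ
          rw [hAC2 τ (hIss hτ)]
          ring
      _ = (∫ τ in (0:ℝ)..s, (s - τ) * u₂ 0)
            + ∫ τ in (0:ℝ)..s, (s - τ) * ∫ x in (0:ℝ)..τ, u₃ x :=
          intervalIntegral.integral_add ia ib
      _ = u₂ 0 * ((1/2)*s^2) + ∫ t in (0:ℝ)..s, u₃ t * ((1/2)*s^2 - s*t + (1/2)*t^2) := by
          rw [e1, hswap2, e2]
  -- RHS manipulations
  have hDcont : Continuous (fun t : ℝ => if t ≤ s then (1/2)*s^2 - s*t + (1/2)*t^2 else 0) := by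
    apply Continuous.if_le (by fun_prop) continuous_const continuous_id continuous_const
    intro x hx
    simp only [id_eq] at hx
    rw [hx]; ring
  have hDint : IntegrableOn
      (fun t => u₃ t * (if t ≤ s then (1/2)*s^2 - s*t + (1/2)*t^2 else 0)) (Icc 0 T) := by
    apply Integrable.mono' ((hu₃T.norm).const_mul ((1/2)*s^2))
      (hu₃T.aestronglyMeasurable.mul hDcont.aestronglyMeasurable)
    filter_upwards [ae_restrict_mem measurableSet_Icc] with t ht
    simp only [Pi.mul_apply, Real.norm_eq_abs, abs_mul]
    have hD : |if t ≤ s then (1/2)*s^2 - s*t + (1/2)*t^2 else (0:ℝ)| ≤ (1/2)*s^2 := by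
      rcases le_or_gt t s with h | h
      · rw [if_pos h, abs_le]
        constructor <;> nlinarith [ht.1, sq_nonneg (s - t), sq_nonneg (s + t)]
      · rw [if_neg (not_le.mpr h), abs_zero]
        positivity
    nlinarith [abs_nonneg (u₃ t), hD]
  have hInt1 : IntervalIntegrable
      (fun t => u₃ t * (if t ≤ s then (1/2)*s^2 - s*t + (1/2)*t^2 else 0)) volume 0 s := by
    apply IntegrableOn.intervalIntegrable
    rw [uIcc_of_le hs0]
    exact hDint.mono_set hIss
  have hInt2 : IntervalIntegrable
      (fun t => u₃ t * (if t ≤ s then (1/2)*s^2 - s*t + (1/2)*t^2 else 0)) volume s T := by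
    apply IntegrableOn.intervalIntegrable
    rw [uIcc_of_le hsT]
    exact hDint.mono_set (Icc_subset_Icc hs0 le_rfl)
  have hzero : (∫ t in s..T, u₃ t * (if t ≤ s then (1/2)*s^2 - s*t + (1/2)*t^2 else 0)) = 0 := by
    have heq : EqOn (fun t => u₃ t * (if t ≤ s then (1/2)*s^2 - s*t + (1/2)*t^2 else 0))
        (fun _ => (0:ℝ)) (uIcc s T) := by
      intro t ht
      rw [uIcc_of_le hsT] at ht
      rcases le_or_gt t s with h | h
      · have hts : t = s := le_antisymm h ht.1
        subst hts
        simp only [if_pos le_rfl]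
        have : (1/2)*t^2 - t*t + (1/2)*t^2 = 0 := by ring
        rw [this, mul_zero]
      · simp only [if_neg (not_le.mpr h), mul_zero]
    rw [intervalIntegral.integral_congr heq]
    simp
  have hcongr : (∫ t in (0:ℝ)..s, u₃ t * ((1/2)*s^2 - s*t + (1/2)*t^2))
      = ∫ t in (0:ℝ)..s, u₃ t * (if t ≤ s then (1/2)*s^2 - s*t + (1/2)*t^2 else 0) := by
    refine intervalIntegral.integral_congr (fun t ht => ?_)
    rw [uIcc_of_le hs0] at ht
    rw [if_pos ht.2]
  rw [h0, h1, d3, d2]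
  simp only [zero_mul, zero_add]
  rw [hL]
  rw [if_pos hs0]
  congr 1
  · norm_num
  · rw [← intervalIntegral.integral_add_adjacent_intervals hInt1 hInt2, hzero, add_zero]
    exact hcongr
end

section
/- Let W be a reproducing kernel Hilbert space of functions on Ω, L : W → Ŵ an injective bounded linear operator into another RKHS Ŵ with kernel G, and {(xᵢ,tᵢ)} a dense sequence in Ω. Define Ψᵢ = L*G_{(xᵢ,tᵢ)}. If ⟨u, Ψᵢ⟩_W = 0 for all i and Lu is continuous on Ω, then u = 0; hence the system {Ψᵢ} is complete in W. -/
/-- Completeness of the system `Ψᵢ = L* G_{(xᵢ,tᵢ)}` (Theorem 3.1): if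
`W` is an RKHS on `Ω`, `L : W → Ŵ` is an injective bounded linear operator
into an RKHS `Ŵ` with kernel `G` (realized by an injective evaluation map
`ev`), `(pᵢ)` is a dense sequence of points in `Ω`, and `u ∈ W` satisfies
`⟪u, Ψᵢ⟫ = 0` for all `i` while `Lu` is continuous as a function on `Ω`,
then `u = 0`; hence `{Ψᵢ}` is complete in `W`. -/
theorem stmt_14 {Ω : Type*} [TopologicalSpace Ω] {W W' : Type*}
    [NormedAddCommGroup W] [InnerProductSpace ℝ W] [CompleteSpace W]
    [NormedAddCommGroup W'] [InnerProductSpace ℝ W'] [CompleteSpace W']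
    (ev : W' →ₗ[ℝ] (Ω → ℝ)) (hev : Function.Injective ev)
    (G : Ω → W') (hrep : ∀ (g : W') (p : Ω), inner ℝ g (G p) = ev g p)
    (L : W →L[ℝ] W') (hL : Function.Injective L)
    (p : ℕ → Ω) (hp : DenseRange p)
    (Ψ : ℕ → W) (hΨ : ∀ i, Ψ i = ContinuousLinearMap.adjoint L (G (p i)))
    (u : W) (horth : ∀ i, (inner ℝ u (Ψ i) : ℝ) = 0)
    (hcont : Continuous (ev (L u))) :
    u = 0 := by
  have hzero : ∀ i, ev (L u) (p i) = 0 := by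
    intro i
    have := horth i
    rw [hΨ i, ContinuousLinearMap.adjoint_inner_right] at this
    rw [← hrep]; exact this
  have hall : ev (L u) = 0 := by
    funext x
    have : ∀ x ∈ Set.range p, ev (L u) x = 0 := by
      rintro _ ⟨i, rfl⟩; exact hzero i
    have := Continuous.ext_on hp hcont continuous_const
      (by rintro _ ⟨i, rfl⟩; exact hzero i)
    exact congrFun this x
  have : L u = 0 := hev (by rw [hall, map_zero])
  exact hL (by rw [this, map_zero])
end
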